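/- Let d ≥ 2 and n ≥ 3 be integers such that at least one non-constant d-adic distribution on X_n exists. Then 1/ρ^{(d)}_min(n) ≤ q^{(d)}(n) ≤ 2·n^{2d}·(ln n)/ρ^{(d)}_min(n). -/

import Mathlib

/-- A `d`-adic distribution on `X_n`: nonnegative, sums to 1, each value `0` or `d^{-ℓ}`, `ℓ ≥ 1`. -/
def IsDadicDist (d n : ℕ) (μ : Fin n → ℝ) : Prop :=
  (∀ i, 0 ≤ μ i) ∧ (∑ i, μ i) = 1 ∧
  ∀ i, μ i = 0 ∨ ∃ ℓ : ℕ, 1 ≤ ℓ ∧ μ i = ((d : ℝ) ^ ℓ)⁻¹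

/-- An ordered partition of `X_n` into `d` pairwise disjoint sets covering `X_n`. -/
def IsOrderedPartition (d n : ℕ) (S : Fin d → Finset (Fin n)) : Prop :=
  (∀ j j', j ≠ j' → Disjoint (S j) (S j')) ∧
  (Finset.univ.biUnion S = Finset.univ)

/-- `S ∈ Div(μ)`: an ordered partition each of whose parts has `μ`-measure `1/d`. -/
def MemDiv (d n : ℕ) (μ : Fin n → ℝ) (S : Fin d → Finset (Fin n)) : Prop :=
  IsOrderedPartition d n S ∧ ∀ j, (∑ x ∈ S j, μ x) = 1 / (d : ℝ)

/-- A `d`-adic hitter: a collection of ordered partitions meeting `Div(μ)` for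
every non-constant `d`-adic distribution `μ` on `X_n`. -/
def IsHitter (d n : ℕ) (Q : Finset (Fin d → Finset (Fin n))) : Prop :=
  (∀ S ∈ Q, IsOrderedPartition d n S) ∧
  ∀ μ : Fin n → ℝ, IsDadicDist d n μ → (∃ i j, μ i ≠ μ j) → ∃ S ∈ Q, MemDiv d n μ S

/-- `q^{(d)}(n)`: minimum cardinality of a `d`-adic hitter on `X_n`. -/
noncomputable def qd (d n : ℕ) : ℕ :=
  sInf {m | ∃ Q : Finset (Fin d → Finset (Fin n)), IsHitter d n Q ∧ Q.card = m}

/-- `ρ_k(Div(μ))` for a type `k : Fin d → ℕ`. -/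
noncomputable def rhoType (d n : ℕ) (μ : Fin n → ℝ) (k : Fin d → ℕ) : ℝ :=
  (({S : Fin d → Finset (Fin n) | MemDiv d n μ S ∧ ∀ j, (S j).card = k j}.ncard : ℝ)) /
    (Nat.multinomial Finset.univ k : ℝ)

/-- `ρ(Div(μ)) = max over types k of ρ_k(Div(μ))`. -/
noncomputable def rhoDiv (d n : ℕ) (μ : Fin n → ℝ) : ℝ :=
  sSup {r | ∃ k : Fin d → ℕ, (∑ j, k j) = n ∧ r = rhoType d n μ k}

/-- `ρ^{(d)}_min(n)`: minimum of `ρ(Div(μ))` over non-constant `d`-adic `μ` on `X_n`. -/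
noncomputable def rhoMinD (d n : ℕ) : ℝ :=
  sInf {r | ∃ μ : Fin n → ℝ, IsDadicDist d n μ ∧ (∃ i j, μ i ≠ μ j) ∧ r = rhoDiv d n μ}

namespace QR

open Finset

attribute [local instance] Classical.propDecidable

variable {d n : ℕ}

noncomputable def DivKF (d n : ℕ) (μ : Fin n → ℝ) (k : Fin d → ℕ) :
    Finset (Fin d → Finset (Fin n)) :=
  univ.filter (fun S => MemDiv d n μ S ∧ ∀ j, (S j).card = k j)

noncomputable def PartKF (d n : ℕ) (k : Fin d → ℕ) : Finset (Fin d → Finset (Fin n)) :=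
  univ.filter (fun S => IsOrderedPartition d n S ∧ ∀ j, (S j).card = k j)

lemma mem_DivKF {μ : Fin n → ℝ} {k : Fin d → ℕ} {S : Fin d → Finset (Fin n)} :
    S ∈ DivKF d n μ k ↔ MemDiv d n μ S ∧ ∀ j, (S j).card = k j := by
  simp [DivKF]

lemma mem_PartKF {k : Fin d → ℕ} {S : Fin d → Finset (Fin n)} :
    S ∈ PartKF d n k ↔ IsOrderedPartition d n S ∧ ∀ j, (S j).card = k j := by
  simp [PartKF]

lemma DivKF_subset_PartKF {μ : Fin n → ℝ} {k : Fin d → ℕ} :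
    DivKF d n μ k ⊆ PartKF d n k := by
  intro S hS
  rw [mem_DivKF] at hS
  rw [mem_PartKF]
  exact ⟨hS.1.1, hS.2⟩

lemma rhoType_eq (μ : Fin n → ℝ) (k : Fin d → ℕ) :
    rhoType d n μ k = ((DivKF d n μ k).card : ℝ) / (Nat.multinomial Finset.univ k : ℝ) := by
  have h : {S : Fin d → Finset (Fin n) | MemDiv d n μ S ∧ ∀ j, (S j).card = k j}
      = ↑(DivKF d n μ k) := by
    ext S; simp [DivKF]
  rw [rhoType, h, Set.ncard_coe_finset]

lemma rhoType_nonneg (μ : Fin n → ℝ) (k : Fin d → ℕ) : 0 ≤ rhoType d n μ k := by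
  rw [rhoType_eq]
  positivity

/-- The finset of types. -/
noncomputable def TypesF (d n : ℕ) : Finset (Fin d → ℕ) :=
  (Fintype.piFinset fun _ : Fin d => Finset.range (n+1)).filter (fun k => ∑ j, k j = n)

lemma mem_TypesF {k : Fin d → ℕ} : k ∈ TypesF d n ↔ ∑ j, k j = n := by
  constructor
  · intro h; exact (mem_filter.mp h).2
  · intro h
    refine mem_filter.mpr ⟨Fintype.mem_piFinset.mpr (fun j => ?_), h⟩
    rw [Finset.mem_range, Nat.lt_succ_iff, ← h]
    exact Finset.single_le_sum (fun _ _ => Nat.zero_le _) (mem_univ j)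

lemma TypesF_nonempty (hd : 0 < d) : (TypesF d n).Nonempty := by
  refine ⟨fun j => if j = ⟨0, hd⟩ then n else 0, mem_TypesF.mpr ?_⟩
  simp

/-- The set in `rhoDiv` as a finset image. -/
lemma rhoDiv_set_eq (μ : Fin n → ℝ) :
    {r | ∃ k : Fin d → ℕ, (∑ j, k j) = n ∧ r = rhoType d n μ k}
      = ↑((TypesF d n).image (rhoType d n μ)) := by
  ext r
  simp only [Set.mem_setOf_eq, coe_image, Set.mem_image, mem_coe]
  constructor
  · rintro ⟨k, hk, rfl⟩; exact ⟨k, mem_TypesF.mpr hk, rfl⟩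
  · rintro ⟨k, hk, rfl⟩; exact ⟨k, mem_TypesF.mp hk, rfl⟩

lemma rhoDiv_attained (hd : 0 < d) (μ : Fin n → ℝ) :
    ∃ k : Fin d → ℕ, (∑ j, k j) = n ∧ rhoDiv d n μ = rhoType d n μ k := by
  have hne : {r | ∃ k : Fin d → ℕ, (∑ j, k j) = n ∧ r = rhoType d n μ k}.Nonempty := by
    obtain ⟨k, hk⟩ := TypesF_nonempty (n := n) hd
    exact ⟨rhoType d n μ k, k, mem_TypesF.mp hk, rfl⟩
  have hfin : {r | ∃ k : Fin d → ℕ, (∑ j, k j) = n ∧ r = rhoType d n μ k}.Finite := by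
    rw [rhoDiv_set_eq]; exact Finset.finite_toSet _
  have := hne.csSup_mem hfin
  rw [rhoDiv]
  exact this

lemma rhoType_le_rhoDiv (μ : Fin n → ℝ) {k : Fin d → ℕ} (hk : ∑ j, k j = n) :
    rhoType d n μ k ≤ rhoDiv d n μ := by
  have hfin : {r | ∃ k : Fin d → ℕ, (∑ j, k j) = n ∧ r = rhoType d n μ k}.Finite := by
    rw [rhoDiv_set_eq]; exact Finset.finite_toSet _
  exact le_csSup hfin.bddAbove ⟨k, hk, rfl⟩

lemma rhoDiv_nonneg (hd : 0 < d) (μ : Fin n → ℝ) : 0 ≤ rhoDiv d n μ := by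
  obtain ⟨k, _, hk⟩ := rhoDiv_attained hd μ
  rw [hk]; exact rhoType_nonneg μ k

end QR
namespace QR

open Finset

attribute [local instance] Classical.propDecidable

variable {d n : ℕ}

/-- finite superset of all possible `rhoDiv` values -/
noncomputable def VF (d n : ℕ) : Finset ℝ :=
  ((Finset.range (Fintype.card (Fin d → Finset (Fin n)) + 1)) ×ˢ TypesF d n).image
    (fun p => (p.1 : ℝ) / (Nat.multinomial Finset.univ p.2 : ℝ))

lemma rhoDiv_mem_VF (hd : 0 < d) (μ : Fin n → ℝ) : rhoDiv d n μ ∈ VF d n := by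
  obtain ⟨k, hk, hval⟩ := rhoDiv_attained hd μ
  rw [hval, rhoType_eq]
  refine Finset.mem_image.mpr ⟨⟨(DivKF d n μ k).card, k⟩, ?_, rfl⟩
  refine Finset.mem_product.mpr ⟨?_, mem_TypesF.mpr hk⟩
  rw [Finset.mem_range, Nat.lt_succ_iff]
  exact Finset.card_le_univ _

lemma rhoMin_mem (hd : 0 < d)
    (hex : ∃ μ : Fin n → ℝ, IsDadicDist d n μ ∧ ∃ i j, μ i ≠ μ j) :
    ∃ μ : Fin n → ℝ, IsDadicDist d n μ ∧ (∃ i j, μ i ≠ μ j) ∧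
      rhoMinD d n = rhoDiv d n μ := by
  have hsub : {r | ∃ μ : Fin n → ℝ, IsDadicDist d n μ ∧ (∃ i j, μ i ≠ μ j) ∧
      r = rhoDiv d n μ} ⊆ ↑(VF d n) := by
    rintro r ⟨μ, _, _, rfl⟩
    exact rhoDiv_mem_VF hd μ
  have hfin := Set.Finite.subset (Finset.finite_toSet _) hsub
  have hne : {r | ∃ μ : Fin n → ℝ, IsDadicDist d n μ ∧ (∃ i j, μ i ≠ μ j) ∧
      r = rhoDiv d n μ}.Nonempty := by
    obtain ⟨μ, h1, h2⟩ := hex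
    exact ⟨rhoDiv d n μ, μ, h1, h2, rfl⟩
  have := hne.csInf_mem hfin
  rw [rhoMinD]
  exact this

lemma rhoMin_le (hd : 0 < d) {μ : Fin n → ℝ} (h1 : IsDadicDist d n μ)
    (h2 : ∃ i j, μ i ≠ μ j) : rhoMinD d n ≤ rhoDiv d n μ := by
  have hsub : {r | ∃ μ : Fin n → ℝ, IsDadicDist d n μ ∧ (∃ i j, μ i ≠ μ j) ∧
      r = rhoDiv d n μ} ⊆ ↑(VF d n) := by
    rintro r ⟨μ, _, _, rfl⟩
    exact rhoDiv_mem_VF hd μ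
  have hfin := Set.Finite.subset (Finset.finite_toSet _) hsub
  exact csInf_le hfin.bddBelow ⟨μ, h1, h2, rfl⟩

lemma sum_card_parts {S : Fin d → Finset (Fin n)} (hS : IsOrderedPartition d n S) :
    ∑ j, (S j).card = n := by
  have h := Finset.card_biUnion (s := (univ : Finset (Fin d))) (t := S)
    (fun j _ j' _ hjj' => hS.1 j j' hjj')
  rw [hS.2, Finset.card_univ, Fintype.card_fin] at h
  exact h.symm

lemma memDiv_mem_DivKF {μ : Fin n → ℝ} {S : Fin d → Finset (Fin n)}
    (hS : MemDiv d n μ S) : S ∈ DivKF d n μ (fun j => (S j).card) :=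
  mem_DivKF.mpr ⟨hS, fun _ => rfl⟩

/-- If `rhoDiv μ = 0` then there are no divisions of `μ` at all. -/
lemma no_div_of_rhoDiv_zero (hd : 0 < d) {μ : Fin n → ℝ}
    (h : rhoDiv d n μ = 0) (S : Fin d → Finset (Fin n)) : ¬ MemDiv d n μ S := by
  intro hS
  set k : Fin d → ℕ := fun j => (S j).card with hk
  have hsum : ∑ j, k j = n := sum_card_parts hS.1
  have hle := rhoType_le_rhoDiv μ hsum
  rw [h] at hle
  have h0 : rhoType d n μ k = 0 := le_antisymm hle (rhoType_nonneg μ k)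
  rw [rhoType_eq] at h0
  have hmult : (0 : ℝ) < (Nat.multinomial Finset.univ k : ℝ) := by
    exact_mod_cast Nat.multinomial_pos _ _
  have hcard : DivKF d n μ k = ∅ := by
    field_simp at h0
    exact Finset.card_eq_zero.mp (by exact_mod_cast (by linarith : ((DivKF d n μ k).card : ℝ) = 0))
  have := memDiv_mem_DivKF hS
  rw [hcard] at this
  exact absurd this (Finset.notMem_empty S)

end QR
namespace QR

open Finset

attribute [local instance] Classical.propDecidable

variable {d n : ℕ}

lemma existsUnique_part {P : Fin d → Finset (Fin n)} (hP : IsOrderedPartition d n P)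
    (x : Fin n) : ∃! j, j ∈ (univ : Finset (Fin d)) ∧ x ∈ P j := by
  have hx : x ∈ univ.biUnion P := by rw [hP.2]; exact mem_univ x
  obtain ⟨j, _, hj⟩ := Finset.mem_biUnion.mp hx
  refine ⟨j, ⟨mem_univ j, hj⟩, ?_⟩
  rintro j' ⟨-, hj'⟩
  by_contra hne
  exact Finset.disjoint_left.mp (hP.1 j' j hne) hj' hj

lemma glue_perm {P Q : Fin d → Finset (Fin n)} (hP : IsOrderedPartition d n P)
    (hQ : IsOrderedPartition d n Q) (e : ∀ j, {x // x ∈ P j} ≃ {x // x ∈ Q j}) :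
    ∃ σ : Equiv.Perm (Fin n), ∀ (j : Fin d) (x : Fin n) (hx : x ∈ P j),
      σ x = ↑(e j ⟨x, hx⟩) := by
  set jf : Fin n → Fin d := fun x => Finset.choose _ _ (existsUnique_part hP x) with hjf
  have hmem : ∀ x, x ∈ P (jf x) := fun x =>
    Finset.choose_property (fun j => x ∈ P j) univ (existsUnique_part hP x)
  have hjf_eq : ∀ (j : Fin d) (x : Fin n), x ∈ P j → jf x = j := by
    intro j x hx
    exact (existsUnique_part hP x).unique ⟨mem_univ _, hmem x⟩ ⟨mem_univ _, hx⟩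
  set f : Fin n → Fin n := fun x => ↑(e (jf x) ⟨x, hmem x⟩) with hf
  have key : ∀ (j : Fin d) (x : Fin n) (hx : x ∈ P j), f x = ↑(e j ⟨x, hx⟩) := by
    intro j x hx
    have h := hjf_eq j x hx
    subst h
    rfl
  have hfQ : ∀ x, f x ∈ Q (jf x) := fun x => (e (jf x) ⟨x, hmem x⟩).2
  have hinj : Function.Injective f := by
    intro x y hxy
    have hjeq : jf x = jf y := by
      by_contra hne
      have h1 := hfQ x
      have h2 := hfQ y
      rw [hxy] at h1
      exact Finset.disjoint_left.mp (hQ.1 (jf x) (jf y) hne) h1 h2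
    have hyP : y ∈ P (jf x) := hjeq ▸ hmem y
    have hx1 : f x = ↑(e (jf x) ⟨x, hmem x⟩) := rfl
    have hy1 : f y = ↑(e (jf x) ⟨y, hyP⟩) := key (jf x) y hyP
    rw [hx1, hy1] at hxy
    have := (e (jf x)).injective (Subtype.coe_injective hxy)
    exact congrArg Subtype.val this
  have hbij : Function.Bijective f := (Finite.injective_iff_bijective).mp hinj
  exact ⟨Equiv.ofBijective f hbij, fun j x hx => key j x hx⟩

lemma partKF_mul_le (k : Fin d → ℕ) :
    (PartKF d n k).card * ∏ j, (k j).factorial ≤ n.factorial := by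
  rcases Finset.eq_empty_or_nonempty (PartKF d n k) with he | ⟨S₀, hS₀⟩
  · rw [he]; simp
  obtain ⟨hS₀p, hS₀c⟩ := mem_PartKF.mp hS₀
  -- fibers in the permutation group
  set F : (Fin d → Finset (Fin n)) → Finset (Equiv.Perm (Fin n)) :=
    fun S => univ.filter (fun σ => ∀ j, (S₀ j).image σ = S j) with hF
  have hdisj : ∀ S ∈ PartKF d n k, ∀ S' ∈ PartKF d n k, S ≠ S' → Disjoint (F S) (F S') := by
    intro S _ S' _ hne
    rw [Finset.disjoint_left]
    intro σ h1 h2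
    rw [hF, mem_filter] at h1 h2
    exact hne (funext fun j => (h1.2 j).symm.trans (h2.2 j))
  have hlow : ∀ S ∈ PartKF d n k, ∏ j, (k j).factorial ≤ (F S).card := by
    intro S hS
    obtain ⟨hSp, hSc⟩ := mem_PartKF.mp hS
    -- injection from the pi type of equivs into the fiber
    have hcards : ∀ j, Fintype.card {x // x ∈ S₀ j} = Fintype.card {x // x ∈ S j} := by
      intro j
      rw [Fintype.card_coe, Fintype.card_coe, hS₀c j, hSc j]
    set g : (∀ j, {x // x ∈ S₀ j} ≃ {x // x ∈ S j}) → Equiv.Perm (Fin n) :=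
      fun e => (glue_perm hS₀p hSp e).choose with hg
    have hgspec : ∀ e (j : Fin d) (x : Fin n) (hx : x ∈ S₀ j), g e x = ↑(e j ⟨x, hx⟩) :=
      fun e => (glue_perm hS₀p hSp e).choose_spec
    have hgmem : ∀ e, g e ∈ F S := by
      intro e
      rw [hF, mem_filter]
      refine ⟨mem_univ _, fun j => ?_⟩
      apply Finset.eq_of_subset_of_card_le
      · intro y hy
        obtain ⟨x, hx, rfl⟩ := Finset.mem_image.mp hy
        rw [hgspec e j x hx]
        exact (e j ⟨x, hx⟩).2
      · rw [Finset.card_image_of_injective _ (g e).injective, hS₀c j, hSc j]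
    have hginj : Function.Injective g := by
      intro e e' hee
      funext j
      apply Equiv.ext
      rintro ⟨x, hx⟩
      have h1 := hgspec e j x hx
      have h2 := hgspec e' j x hx
      rw [hee] at h1
      exact Subtype.coe_injective (h1.symm.trans h2)
    calc ∏ j, (k j).factorial
        = Fintype.card (∀ j, {x // x ∈ S₀ j} ≃ {x // x ∈ S j}) := by
          rw [Fintype.card_pi]
          refine (Finset.prod_congr rfl fun j _ => ?_).symm
          rw [Fintype.card_equiv (Fintype.equivOfCardEq (hcards j)),
            Fintype.card_coe, hS₀c j]
      _ = (univ : Finset (∀ j, {x // x ∈ S₀ j} ≃ {x // x ∈ S j})).card := by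
          rw [Finset.card_univ]
      _ ≤ (F S).card := Finset.card_le_card_of_injOn g (fun e _ => hgmem e)
          (fun e _ e' _ h => hginj h)
  calc (PartKF d n k).card * ∏ j, (k j).factorial
      = ∑ _S ∈ PartKF d n k, ∏ j, (k j).factorial := by
        rw [Finset.sum_const, smul_eq_mul]
    _ ≤ ∑ S ∈ PartKF d n k, (F S).card := Finset.sum_le_sum hlow
    _ = ((PartKF d n k).biUnion F).card := (Finset.card_biUnion hdisj).symm
    _ ≤ Fintype.card (Equiv.Perm (Fin n)) := Finset.card_le_univ _
    _ = n.factorial := by rw [Fintype.card_perm, Fintype.card_fin]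

lemma partKF_card_le (k : Fin d → ℕ) :
    (PartKF d n k).card ≤ Nat.multinomial Finset.univ k := by
  have h := partKF_mul_le (d := d) (n := n) k
  rcases Finset.eq_empty_or_nonempty (PartKF d n k) with he | ⟨S₀, hS₀⟩
  · rw [he]; simp
  obtain ⟨hS₀p, hS₀c⟩ := mem_PartKF.mp hS₀
  have hsum : ∑ j, k j = n := by
    rw [← sum_card_parts hS₀p]
    exact Finset.sum_congr rfl fun j _ => (hS₀c j).symm
  have hspec := Nat.multinomial_spec Finset.univ k
  rw [hsum] at hspec
  rw [← hspec] at h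
  have hpos : 0 < ∏ j, (k j).factorial := Finset.prod_pos fun j _ => Nat.factorial_pos _
  calc (PartKF d n k).card
      = (PartKF d n k).card * (∏ j, (k j).factorial) / (∏ j, (k j).factorial) := by
        rw [Nat.mul_div_cancel _ hpos]
    _ ≤ (∏ j, (k j).factorial) * Nat.multinomial Finset.univ k / (∏ j, (k j).factorial) :=
        Nat.div_le_div_right h
    _ = Nat.multinomial Finset.univ k := by rw [Nat.mul_div_right _ hpos]  -- check
  
lemma rhoType_le_one (μ : Fin n → ℝ) (k : Fin d → ℕ) : rhoType d n μ k ≤ 1 := by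
  rw [rhoType_eq]
  have hmult : (0 : ℝ) < (Nat.multinomial Finset.univ k : ℝ) := by
    exact_mod_cast Nat.multinomial_pos _ _
  rw [div_le_one hmult]
  exact_mod_cast le_trans (Finset.card_le_card DivKF_subset_PartKF) (partKF_card_le k)

lemma rhoDiv_le_one (hd : 0 < d) (μ : Fin n → ℝ) : rhoDiv d n μ ≤ 1 := by
  obtain ⟨k, _, hk⟩ := rhoDiv_attained hd μ
  rw [hk]; exact rhoType_le_one μ k

end QR
namespace QR

open Finset

attribute [local instance] Classical.propDecidable

variable {d n : ℕ}

lemma dadic_comp_perm {μ : Fin n → ℝ} (h : IsDadicDist d n μ) (σ : Equiv.Perm (Fin n)) :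
    IsDadicDist d n (fun i => μ (σ i)) := by
  obtain ⟨h0, h1, h2⟩ := h
  refine ⟨fun i => h0 _, ?_, fun i => h2 _⟩
  rw [Equiv.sum_comp σ μ]
  exact h1

lemma nonconst_comp_perm {μ : Fin n → ℝ} (h : ∃ i j, μ i ≠ μ j) (σ : Equiv.Perm (Fin n)) :
    ∃ i j, (fun i => μ (σ i)) i ≠ (fun i => μ (σ i)) j := by
  obtain ⟨i, j, hij⟩ := h
  exact ⟨σ.symm i, σ.symm j, by simpa using hij⟩

lemma hitter_lower_bound (hd : 0 < d) {μ : Fin n → ℝ} (h1 : IsDadicDist d n μ)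
    (h2 : ∃ i j, μ i ≠ μ j) {Q : Finset (Fin d → Finset (Fin n))} (hQ : IsHitter d n Q) :
    1 ≤ (Q.card : ℝ) * rhoDiv d n μ := by
  set Bad : (Fin d → Finset (Fin n)) → Finset (Equiv.Perm (Fin n)) :=
    fun S => univ.filter (fun σ => MemDiv d n (fun i => μ (σ i)) S) with hBad
  -- every permutation is in some Bad S, S ∈ Q
  have hcover : (univ : Finset (Equiv.Perm (Fin n))) ⊆ Q.biUnion Bad := by
    intro σ _
    obtain ⟨S, hSQ, hSdiv⟩ := hQ.2 _ (dadic_comp_perm h1 σ) (nonconst_comp_perm h2 σ)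
    exact Finset.mem_biUnion.mpr ⟨S, hSQ, by rw [hBad]; exact mem_filter.mpr ⟨mem_univ _, hSdiv⟩⟩
  have hcard1 : (n.factorial : ℕ) ≤ ∑ S ∈ Q, (Bad S).card := by
    calc n.factorial = Fintype.card (Equiv.Perm (Fin n)) := by
          rw [Fintype.card_perm, Fintype.card_fin]
      _ = (univ : Finset (Equiv.Perm (Fin n))).card := Finset.card_univ.symm
      _ ≤ (Q.biUnion Bad).card := Finset.card_le_card hcover
      _ ≤ ∑ S ∈ Q, (Bad S).card := Finset.card_biUnion_le
  -- per-partition bound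
  have hper : ∀ S ∈ Q, ((Bad S).card : ℝ) ≤ rhoDiv d n μ * n.factorial := by
    intro S hSQ
    have hSp : IsOrderedPartition d n S := hQ.1 S hSQ
    set k : Fin d → ℕ := fun j => (S j).card with hk
    have hksum : ∑ j, k j = n := sum_card_parts hSp
    set Φ : Equiv.Perm (Fin n) → (Fin d → Finset (Fin n)) :=
      fun σ => fun j => (S j).image σ with hΦ
    have himg : ∀ σ ∈ Bad S, Φ σ ∈ DivKF d n μ k := by
      intro σ hσ
      have hσdiv : MemDiv d n (fun i => μ (σ i)) S := (mem_filter.mp hσ).2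
      refine mem_DivKF.mpr ⟨⟨⟨?_, ?_⟩, ?_⟩, ?_⟩
      · intro j j' hjj'
        rw [Finset.disjoint_left]
        intro y hy hy'
        obtain ⟨x, hx, rfl⟩ := Finset.mem_image.mp hy
        obtain ⟨x', hx', hxx'⟩ := Finset.mem_image.mp hy'
        rw [σ.injective hxx'] at hx'
        exact Finset.disjoint_left.mp (hσdiv.1.1 j j' hjj') hx hx'
      · rw [hΦ]
        simp only
        rw [← Finset.biUnion_image]
        rw [hσdiv.1.2]
        exact Finset.image_univ_equiv σ
      · intro j
        rw [hΦ]
        simp only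
        rw [Finset.sum_image (fun x _ y _ h => σ.injective h)]
        exact hσdiv.2 j
      · intro j
        rw [hΦ]
        simp only
        rw [Finset.card_image_of_injective _ σ.injective]
    have hfiber : ∀ T ∈ (Bad S).image Φ,
        ((Bad S).filter (fun σ => Φ σ = T)).card ≤ ∏ j, (k j).factorial := by
      intro T hT
      obtain ⟨σ₀, hσ₀, rfl⟩ := Finset.mem_image.mp hT
      have hTk : ∀ j, ((Φ σ₀) j).card = k j := (mem_DivKF.mp (himg σ₀ hσ₀)).2
      set mkEmb : (σ : Equiv.Perm (Fin n)) → (∀ j, (S j).image ⇑σ = Φ σ₀ j) →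
          (∀ j, {x // x ∈ S j} ↪ {x // x ∈ Φ σ₀ j}) :=
        fun σ h => fun j => ⟨fun x => ⟨σ x, by rw [← h j]; exact Finset.mem_image_of_mem _ x.2⟩,
          fun x y hxy => Subtype.coe_injective (σ.injective (congrArg Subtype.val hxy))⟩ with hmk
      set f : Equiv.Perm (Fin n) → (∀ j, {x // x ∈ S j} ↪ {x // x ∈ Φ σ₀ j}) :=
        fun σ => if h : ∀ j, (S j).image ⇑σ = Φ σ₀ j then mkEmb σ h
          else mkEmb σ₀ (fun _ => rfl) with hfdef
      have hfval : ∀ (σ : Equiv.Perm (Fin n)) (h : ∀ j, (S j).image ⇑σ = Φ σ₀ j)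
          (j : Fin d) (x : {x // x ∈ S j}), ((f σ j x : Fin n)) = σ x := by
        intro σ h j x
        rw [hfdef]
        simp only [dif_pos h]
        rfl
      have hfib_eq : ∀ σ ∈ (Bad S).filter (fun σ => Φ σ = Φ σ₀),
          ∀ j, (S j).image ⇑σ = Φ σ₀ j := by
        intro σ hσ j
        exact congrFun (Finset.mem_filter.mp hσ).2 j
      have : (((Bad S).filter (fun σ => Φ σ = Φ σ₀)).card : ℕ)
          ≤ Fintype.card (∀ j, {x // x ∈ S j} ↪ {x // x ∈ (Φ σ₀) j}) := by
        rw [← Finset.card_univ]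
        refine Finset.card_le_card_of_injOn f (fun σ _ => mem_univ _) ?_
        intro σ hσm σ' hσ'm hee
        have hh := hfib_eq σ hσm
        have hh' := hfib_eq σ' hσ'm
        apply Equiv.ext
        intro x
        have hx : x ∈ univ.biUnion S := by rw [hSp.2]; exact mem_univ x
        obtain ⟨j, _, hxj⟩ := Finset.mem_biUnion.mp hx
        have e1 := hfval σ hh j ⟨x, hxj⟩
        have e2 := hfval σ' hh' j ⟨x, hxj⟩
        rw [hee] at e1
        exact e1.symm.trans e2
      calc (((Bad S).filter (fun σ => Φ σ = Φ σ₀)).card : ℕ)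
          ≤ Fintype.card (∀ j, {x // x ∈ S j} ↪ {x // x ∈ (Φ σ₀) j}) := this
        _ = ∏ j, (k j).factorial := by
            rw [Fintype.card_pi]
            refine Finset.prod_congr rfl fun j _ => ?_
            rw [Fintype.card_embedding_eq, Fintype.card_coe, Fintype.card_coe, hTk j, hk]
            simp only
            exact Nat.descFactorial_self _
    have hmain : (Bad S).card ≤ (∏ j, (k j).factorial) * (DivKF d n μ k).card := by
      calc (Bad S).card ≤ (∏ j, (k j).factorial) * ((Bad S).image Φ).card :=
            Finset.card_le_mul_card_image (Bad S) _ hfiber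
        _ ≤ (∏ j, (k j).factorial) * (DivKF d n μ k).card := by
            apply Nat.mul_le_mul_left
            apply Finset.card_le_card
            intro T hT
            obtain ⟨σ, hσ, rfl⟩ := Finset.mem_image.mp hT
            exact himg σ hσ
    -- convert to reals
    have hmult : (0 : ℝ) < (Nat.multinomial Finset.univ k : ℝ) := by
      exact_mod_cast Nat.multinomial_pos _ _
    have hdiv_le : ((DivKF d n μ k).card : ℝ) ≤ rhoDiv d n μ * (Nat.multinomial Finset.univ k : ℝ) := by
      have := rhoType_le_rhoDiv μ hksum
      rw [rhoType_eq, div_le_iff₀ hmult] at this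
      exact this
    have hspec : ((∏ j, (k j).factorial : ℕ) : ℝ) * (Nat.multinomial Finset.univ k : ℝ)
        = (n.factorial : ℝ) := by
      have := Nat.multinomial_spec Finset.univ k
      rw [hksum] at this
      exact_mod_cast this
    calc ((Bad S).card : ℝ)
        ≤ ((∏ j, (k j).factorial : ℕ) : ℝ) * ((DivKF d n μ k).card : ℝ) := by exact_mod_cast hmain
      _ ≤ ((∏ j, (k j).factorial : ℕ) : ℝ) * (rhoDiv d n μ * (Nat.multinomial Finset.univ k : ℝ)) := by
          apply mul_le_mul_of_nonneg_left hdiv_le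
          positivity
      _ = rhoDiv d n μ * (((∏ j, (k j).factorial : ℕ) : ℝ) * (Nat.multinomial Finset.univ k : ℝ)) := by
          ring
      _ = rhoDiv d n μ * n.factorial := by rw [hspec]
  -- combine
  have hfacpos : (0 : ℝ) < (n.factorial : ℝ) := by exact_mod_cast Nat.factorial_pos n
  have : (n.factorial : ℝ) ≤ (Q.card : ℝ) * (rhoDiv d n μ * n.factorial) := by
    calc (n.factorial : ℝ) ≤ ((∑ S ∈ Q, (Bad S).card : ℕ) : ℝ) := by exact_mod_cast hcard1
      _ = ∑ S ∈ Q, ((Bad S).card : ℝ) := by push_cast; ring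
      _ ≤ ∑ _S ∈ Q, rhoDiv d n μ * n.factorial := Finset.sum_le_sum hper
      _ = (Q.card : ℝ) * (rhoDiv d n μ * n.factorial) := by
          rw [Finset.sum_const, nsmul_eq_mul]
  have := le_of_mul_le_mul_right (by linarith [this] : 1 * (n.factorial : ℝ) ≤ ((Q.card : ℝ) * rhoDiv d n μ) * (n.factorial : ℝ)) hfacpos
  linarith
end QR
namespace QR

open Finset

attribute [local instance] Classical.propDecidable

variable {d n : ℕ}

lemma exp_le_card_aux (hd : 2 ≤ d) : ∀ (m : ℕ) (s : Multiset ℕ), Multiset.card s = m →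
    (∀ ℓ ∈ s, 1 ≤ ℓ) → ((s.map (fun ℓ => ((d : ℝ) ^ ℓ)⁻¹)).sum = 1) →
    ∀ ℓ ∈ s, ℓ ≤ m := by
  have hd0 : 0 < d := lt_of_lt_of_le (by norm_num) hd
  have hdR : (0 : ℝ) < (d : ℝ) := by exact_mod_cast hd0
  intro m
  induction m using Nat.strong_induction_on with
  | _ m IH =>
    intro s hcard hpos hsum ℓ₀ hℓ₀
    have hne : s ≠ 0 := by
      intro h
      rw [h] at hsum
      simp at hsum
    have htne : s.toFinset.Nonempty := by
      obtain ⟨a, ha⟩ := Multiset.exists_mem_of_ne_zero hne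
      exact ⟨a, Multiset.mem_toFinset.mpr ha⟩
    set L := s.toFinset.max' htne with hL
    have hLmem : L ∈ s := Multiset.mem_toFinset.mp (s.toFinset.max'_mem htne)
    have hLmax : ∀ ℓ ∈ s, ℓ ≤ L := fun ℓ hℓ =>
      s.toFinset.le_max' ℓ (Multiset.mem_toFinset.mpr hℓ)
    have hm_pos : 0 < m := by
      rw [← hcard]
      exact Multiset.card_pos.mpr hne
    have hℓ₀L : ℓ₀ ≤ L := hLmax ℓ₀ hℓ₀
    suffices hLm : L ≤ m by exact le_trans hℓ₀L hLm
    rcases Nat.lt_or_ge L 2 with hL1 | hL2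
    · omega
    -- natural number identity
    have hkey : (s.map (fun ℓ => d ^ (L - ℓ))).sum = d ^ L := by
      have hcast : (((s.map (fun ℓ => d ^ (L - ℓ))).sum : ℕ) : ℝ)
          = ((s.map (fun ℓ => ((d : ℝ) ^ (L - ℓ)))).sum) := by
        rw [Nat.cast_multiset_sum, Multiset.map_map]
        congr 1
        apply Multiset.map_congr rfl
        intro ℓ _
        simp [Function.comp]
      have h2 : (s.map (fun ℓ => ((d : ℝ) ^ (L - ℓ)))).sum = (d : ℝ) ^ L := by
        have hmc : s.map (fun ℓ => ((d : ℝ) ^ (L - ℓ)))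
            = s.map (fun ℓ => (d : ℝ) ^ L * ((d : ℝ) ^ ℓ)⁻¹) := by
          apply Multiset.map_congr rfl
          intro ℓ hℓ
          have hle := hLmax ℓ hℓ
          have hps : (d : ℝ) ^ (L - ℓ) * (d : ℝ) ^ ℓ = (d : ℝ) ^ L := by
            rw [← pow_add]
            congr 1
            omega
          have hpne : ((d : ℝ) ^ ℓ) ≠ 0 := by positivity
          rw [eq_comm, ← hps, mul_inv_cancel_right₀ hpne]
        rw [hmc, Multiset.sum_map_mul_left, hsum, mul_one]
      have h3 := hcast.trans h2
      exact_mod_cast h3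
    set cL := s.count L with hcL
    have hcL1 : 1 ≤ cL := Multiset.one_le_count_iff_mem.mpr hLmem
    have hfilter_eq : s.filter (fun ℓ => ℓ = L) = Multiset.replicate cL L := by
      rw [hcL, ← Multiset.filter_eq']
    have hsum_split : cL + ((s.filter (fun ℓ => ¬ ℓ = L)).map (fun ℓ => d ^ (L - ℓ))).sum
        = d ^ L := by
      conv_lhs at hkey => rw [(Multiset.filter_add_not (fun ℓ => ℓ = L) s).symm]
      rw [Multiset.map_add, Multiset.sum_add, hfilter_eq, Multiset.map_replicate] at hkey
      simp only [Nat.sub_self, pow_zero, Multiset.sum_replicate, smul_eq_mul, mul_one] at hkey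
      exact hkey
    have hdvd_rest : d ∣ ((s.filter (fun ℓ => ¬ ℓ = L)).map (fun ℓ => d ^ (L - ℓ))).sum := by
      apply Multiset.dvd_sum
      intro x hx
      obtain ⟨ℓ, hℓ, rfl⟩ := Multiset.mem_map.mp hx
      have hℓs : ℓ ∈ s := (Multiset.mem_filter.mp hℓ).1
      have hℓne : ¬ ℓ = L := (Multiset.mem_filter.mp hℓ).2
      have : 1 ≤ L - ℓ := by
        have := hLmax ℓ hℓs
        omega
      exact dvd_pow_self d (by omega)
    have hdvd_cL : d ∣ cL := by
      have h1 : d ∣ d ^ L := dvd_pow_self d (by omega)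
      have h2 : cL = d ^ L - ((s.filter (fun ℓ => ¬ ℓ = L)).map (fun ℓ => d ^ (L - ℓ))).sum := by
        omega
      rw [h2]
      exact Nat.dvd_sub h1 hdvd_rest
    have hcLd : d ≤ cL := Nat.le_of_dvd (by omega) hdvd_cL
    have hrep_le : Multiset.replicate d L ≤ s := by
      rw [Multiset.le_iff_count]
      intro a
      rw [Multiset.count_replicate]
      split
      · next h => subst h; exact hcLd
      · exact Nat.zero_le _
    have hmd : d ≤ m := le_trans hcLd (le_trans (Multiset.count_le_card L s) (le_of_eq hcard))
    set s' : Multiset ℕ := (L - 1) ::ₘ (s - Multiset.replicate d L) with hs'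
    have hsub_add : s - Multiset.replicate d L + Multiset.replicate d L = s :=
      tsub_add_cancel_of_le hrep_le
    have hcard' : Multiset.card s' = m - d + 1 := by
      rw [hs', Multiset.card_cons, Multiset.card_sub hrep_le, Multiset.card_replicate, hcard]
    have hmem_sub : ∀ ℓ ∈ s - Multiset.replicate d L, ℓ ∈ s := fun ℓ hℓ =>
      Multiset.mem_of_le (Multiset.sub_le_self _ _) hℓ
    have hpos' : ∀ ℓ ∈ s', 1 ≤ ℓ := by
      intro ℓ hℓ
      rcases Multiset.mem_cons.mp hℓ with h | h
      · omega
      · exact hpos ℓ (hmem_sub ℓ h)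
    have hsum' : ((s'.map (fun ℓ => ((d : ℝ) ^ ℓ)⁻¹)).sum = 1) := by
      have hsplit2 : (s.map (fun ℓ => ((d : ℝ) ^ ℓ)⁻¹)).sum
          = ((s - Multiset.replicate d L).map (fun ℓ => ((d : ℝ) ^ ℓ)⁻¹)).sum
            + (d : ℝ) * ((d : ℝ) ^ L)⁻¹ := by
        conv_lhs => rw [← hsub_add]
        rw [Multiset.map_add, Multiset.sum_add, Multiset.map_replicate, Multiset.sum_replicate]
        push_cast
        ring
      have hLL : (d : ℝ) * ((d : ℝ) ^ L)⁻¹ = ((d : ℝ) ^ (L - 1))⁻¹ := by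
        have hLs : L = (L - 1) + 1 := by omega
        rw [hLs, pow_succ]
        field_simp
        ring_nf
        congr 1
        omega
      rw [hs', Multiset.map_cons, Multiset.sum_cons, ← hLL]
      rw [hsplit2] at hsum
      linarith
    have hlt : m - d + 1 < m := by omega
    have hIH := IH (m - d + 1) hlt s' hcard' hpos' hsum'
    have hL1mem : (L - 1) ∈ s' := Multiset.mem_cons_self _ _
    have := hIH (L - 1) hL1mem
    omega

end QR
namespace QR

open Finset

attribute [local instance] Classical.propDecidable

variable {d n : ℕ}

/-- finite set of possible values of a `d`-adic distribution -/
noncomputable def ValsF (d n : ℕ) : Finset ℝ :=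
  insert (0 : ℝ) ((Finset.Icc 1 n).image fun ℓ => ((d : ℝ) ^ ℓ)⁻¹)

/-- finite set of functions containing all `d`-adic distributions -/
noncomputable def DF (d n : ℕ) : Finset (Fin n → ℝ) :=
  Fintype.piFinset (fun _ : Fin n => ValsF d n)

lemma valsF_card : (ValsF d n).card ≤ n + 1 := by
  refine le_trans (Finset.card_insert_le _ _) ?_
  have := Finset.card_image_le (s := Finset.Icc 1 n) (f := fun ℓ => ((d : ℝ) ^ ℓ)⁻¹)
  rw [Nat.card_Icc] at this
  omega

lemma DF_card : (DF d n).card ≤ (n + 1) ^ n := by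
  rw [DF, Fintype.card_piFinset]
  calc ∏ _i : Fin n, (ValsF d n).card ≤ ∏ _i : Fin n, (n + 1) :=
        Finset.prod_le_prod (fun _ _ => Nat.zero_le _) (fun _ _ => valsF_card)
    _ = (n + 1) ^ n := by rw [Finset.prod_const, Finset.card_univ, Fintype.card_fin]

lemma dadic_mem_DF (hd : 2 ≤ d) {μ : Fin n → ℝ} (h : IsDadicDist d n μ) :
    μ ∈ DF d n := by
  rw [DF, Fintype.mem_piFinset]
  intro i
  rcases Classical.em (μ i = 0) with h0 | h0
  · rw [h0, ValsF]
    exact Finset.mem_insert_self _ _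
  -- choose exponents for all nonzero values
  have hch : ∀ i' : Fin n, μ i' ≠ 0 → ∃ ℓ : ℕ, 1 ≤ ℓ ∧ μ i' = ((d : ℝ) ^ ℓ)⁻¹ := by
    intro i' hi'
    rcases h.2.2 i' with h' | h'
    · exact absurd h' hi'
    · exact h'
  set g : Fin n → ℕ := fun i' =>
    if h' : μ i' = 0 then 1 else Classical.choose (hch i' h') with hg
  have hgspec : ∀ i' : Fin n, μ i' ≠ 0 → 1 ≤ g i' ∧ μ i' = ((d : ℝ) ^ g i')⁻¹ := by
    intro i' hi'
    rw [hg]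
    simp only [dif_neg hi']
    exact Classical.choose_spec (hch i' hi')
  set s : Multiset ℕ := ((univ.filter (fun i' => μ i' ≠ 0)).val).map g with hs
  have hcards : Multiset.card s = (univ.filter (fun i' : Fin n => μ i' ≠ 0)).card := by
    rw [hs, Multiset.card_map]
    rfl
  have hcardn : Multiset.card s ≤ n := by
    rw [hcards]
    exact le_trans (Finset.card_filter_le _ _) (by rw [Finset.card_univ, Fintype.card_fin])
  have hposs : ∀ ℓ ∈ s, 1 ≤ ℓ := by
    intro ℓ hℓ
    obtain ⟨i', hi', rfl⟩ := Multiset.mem_map.mp hℓ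
    have : i' ∈ univ.filter (fun i' : Fin n => μ i' ≠ 0) := hi'
    exact (hgspec i' (Finset.mem_filter.mp this).2).1
  have hsums : ((s.map (fun ℓ => ((d : ℝ) ^ ℓ)⁻¹)).sum = 1) := by
    rw [hs, Multiset.map_map]
    have heq : ∑ i' ∈ univ.filter (fun i' : Fin n => μ i' ≠ 0), ((d : ℝ) ^ g i')⁻¹ = 1 := by
      have h1 : ∑ i' ∈ univ.filter (fun i' : Fin n => μ i' ≠ 0), ((d : ℝ) ^ g i')⁻¹
          = ∑ i' ∈ univ.filter (fun i' : Fin n => μ i' ≠ 0), μ i' := by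
        refine Finset.sum_congr rfl fun i' hi' => ?_
        exact ((hgspec i' (Finset.mem_filter.mp hi').2).2).symm
      rw [h1, Finset.sum_filter_of_ne (fun i' _ h' => h'), h.2.1]
    exact heq
  have hbound := exp_le_card_aux hd (Multiset.card s) s rfl hposs hsums
  have hgi : g i ∈ s := by
    rw [hs]
    apply Multiset.mem_map_of_mem
    exact Finset.mem_filter.mpr ⟨mem_univ i, h0⟩
  have h1 := hgspec i h0
  rw [ValsF, Finset.mem_insert]
  right
  refine Finset.mem_image.mpr ⟨g i, ?_, h1.2.symm⟩
  rw [Finset.mem_Icc]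
  exact ⟨h1.1, le_trans (hbound (g i) hgi) hcardn⟩

lemma typesF_card_le (hd : 1 ≤ d) : (TypesF d n).card ≤ (n + 1) ^ (d - 1) := by
  obtain ⟨e, rfl⟩ : ∃ e, d = e + 1 := ⟨d - 1, by omega⟩
  simp only [Nat.add_sub_cancel]
  set F : (Fin (e + 1) → ℕ) → (Fin e → Fin (n + 1)) :=
    fun k j => ⟨min (k j.castSucc) n, by omega⟩ with hF
  have hval : ∀ k ∈ TypesF (e + 1) n, ∀ j : Fin e, (F k j : ℕ) = k j.castSucc := by
    intro k hk j
    have hsum := mem_TypesF.mp hk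
    have : k j.castSucc ≤ n := by
      rw [← hsum]
      exact Finset.single_le_sum (fun _ _ => Nat.zero_le _) (mem_univ _)
    rw [hF]
    simp [min_eq_left this]
  calc (TypesF (e + 1) n).card
      ≤ (univ : Finset (Fin e → Fin (n + 1))).card := by
        refine Finset.card_le_card_of_injOn F (fun _ _ => mem_univ _) ?_
        intro k hk k' hk' hFk
        have hsum := mem_TypesF.mp hk
        have hsum' := mem_TypesF.mp hk'
        have hcs : ∀ j : Fin e, k j.castSucc = k' j.castSucc := by
          intro j
          rw [← hval k hk j, ← hval k' hk' j, hFk]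
        have hlast : k (Fin.last e) = k' (Fin.last e) := by
          have h1 := Fin.sum_univ_castSucc (f := k)
          have h2 := Fin.sum_univ_castSucc (f := k')
          rw [hsum] at h1
          rw [hsum'] at h2
          have h3 : ∑ j : Fin e, k j.castSucc = ∑ j : Fin e, k' j.castSucc :=
            Finset.sum_congr rfl fun j _ => hcs j
          omega
        funext i
        rcases Fin.eq_castSucc_or_eq_last i with ⟨j, rfl⟩ | rfl
        · exact hcs j
        · exact hlast
    _ = (n + 1) ^ e := by
        rw [Finset.card_univ, Fintype.card_fun, Fintype.card_fin, Fintype.card_fin]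

end QR
namespace QR

open Finset

attribute [local instance] Classical.propDecidable

variable {d n : ℕ}

lemma exists_good_type (hd : 0 < d) {μ : Fin n → ℝ} (h1 : IsDadicDist d n μ)
    (h2 : ∃ i j, μ i ≠ μ j) :
    ∃ k, k ∈ TypesF d n ∧
      rhoMinD d n * (Nat.multinomial Finset.univ k : ℝ) ≤ ((DivKF d n μ k).card : ℝ) := by
  obtain ⟨k, hks, hkeq⟩ := rhoDiv_attained hd μ
  refine ⟨k, mem_TypesF.mpr hks, ?_⟩
  have hle : rhoMinD d n ≤ rhoDiv d n μ := rhoMin_le hd h1 h2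
  rw [hkeq, rhoType_eq] at hle
  have hmult : (0 : ℝ) < (Nat.multinomial Finset.univ k : ℝ) := by
    exact_mod_cast Nat.multinomial_pos _ _
  rw [le_div_iff₀ hmult] at hle
  exact hle

set_option maxHeartbeats 1000000 in
lemma greedy_step (hd : 0 < d) (hρ : 0 < rhoMinD d n)
    (R : Finset (Fin n → ℝ)) (hR : ∀ μ ∈ R, IsDadicDist d n μ ∧ ∃ i j, μ i ≠ μ j)
    (hRne : R.Nonempty) :
    ∃ S : Fin d → Finset (Fin n), IsOrderedPartition d n S ∧
      rhoMinD d n / ((TypesF d n).card : ℝ) * (R.card : ℝ)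
        ≤ ((R.filter (fun μ => MemDiv d n μ S)).card : ℝ) := by
  set ρ := rhoMinD d n with hρdef
  have hTne : (TypesF d n).Nonempty := TypesF_nonempty hd
  set T := (TypesF d n).card with hT
  have hT1 : (1 : ℝ) ≤ (T : ℝ) := by
    exact_mod_cast Finset.card_pos.mpr hTne
  have hT0 : (0 : ℝ) < (T : ℝ) := lt_of_lt_of_le one_pos hT1
  have hRpos : (0 : ℝ) < (R.card : ℝ) := by
    exact_mod_cast Finset.card_pos.mpr hRne
  obtain ⟨kf, hkf⟩ : ∃ kf : (Fin n → ℝ) → (Fin d → ℕ), ∀ μ ∈ R, kf μ ∈ TypesF d n ∧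
      ρ * (Nat.multinomial Finset.univ (kf μ) : ℝ) ≤ ((DivKF d n μ (kf μ)).card : ℝ) := by
    refine ⟨fun μ =>
      if h : ∃ k, k ∈ TypesF d n ∧
          ρ * (Nat.multinomial Finset.univ k : ℝ) ≤ ((DivKF d n μ k).card : ℝ)
      then h.choose else (fun _ => 0), ?_⟩
    intro μ hμ
    have hex : ∃ k, k ∈ TypesF d n ∧
        ρ * (Nat.multinomial Finset.univ k : ℝ) ≤ ((DivKF d n μ k).card : ℝ) :=
      exists_good_type hd (hR μ hμ).1 (hR μ hμ).2
    simp only [dif_pos hex]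
    exact hex.choose_spec
  have hfibers : R.card = ∑ k ∈ TypesF d n, (R.filter (fun μ => kf μ = k)).card :=
    Finset.card_eq_sum_card_fiberwise (fun μ hμ => (hkf μ hμ).1)
  have hpig : ∃ k ∈ TypesF d n,
      (R.card : ℝ) / (T : ℝ) ≤ ((R.filter (fun μ => kf μ = k)).card : ℝ) := by
    by_contra hcon
    push_neg at hcon
    have hlt : (R.card : ℝ) < (R.card : ℝ) := by
      calc (R.card : ℝ) = ∑ k ∈ TypesF d n, ((R.filter (fun μ => kf μ = k)).card : ℝ) := by
            rw [hfibers]; push_cast; ring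
        _ < ∑ _k ∈ TypesF d n, (R.card : ℝ) / (T : ℝ) :=
            Finset.sum_lt_sum_of_nonempty hTne (fun k hk => hcon k hk)
        _ = (T : ℝ) * ((R.card : ℝ) / (T : ℝ)) := by rw [Finset.sum_const, nsmul_eq_mul]
        _ = (R.card : ℝ) := by field_simp
    exact lt_irrefl _ hlt
  obtain ⟨k₀, hk₀T, hk₀⟩ := hpig
  set Rk := R.filter (fun μ => kf μ = k₀) with hRk
  have hRkpos : (0 : ℝ) < (Rk.card : ℝ) :=
    lt_of_lt_of_le (div_pos hRpos hT0) hk₀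
  have hmult : (0 : ℝ) < (Nat.multinomial Finset.univ k₀ : ℝ) := by
    exact_mod_cast Nat.multinomial_pos _ _
  have hlower : (Rk.card : ℝ) * (ρ * (Nat.multinomial Finset.univ k₀ : ℝ))
      ≤ ∑ μ ∈ Rk, ((DivKF d n μ k₀).card : ℝ) := by
    calc (Rk.card : ℝ) * (ρ * (Nat.multinomial Finset.univ k₀ : ℝ))
        = ∑ _μ ∈ Rk, ρ * (Nat.multinomial Finset.univ k₀ : ℝ) := by
          rw [Finset.sum_const, nsmul_eq_mul]
      _ ≤ ∑ μ ∈ Rk, ((DivKF d n μ k₀).card : ℝ) := by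
          refine Finset.sum_le_sum fun μ hμ => ?_
          have hμR : μ ∈ R := (Finset.mem_filter.mp hμ).1
          have hμk : kf μ = k₀ := (Finset.mem_filter.mp hμ).2
          have := (hkf μ hμR).2
          rw [hμk] at this
          exact this
  have hswap : ∑ μ ∈ Rk, (DivKF d n μ k₀).card
      = ∑ S ∈ PartKF d n k₀, (Rk.filter (fun μ => S ∈ DivKF d n μ k₀)).card := by
    have h1 : ∀ μ : Fin n → ℝ, (DivKF d n μ k₀).card
        = ((PartKF d n k₀).filter (fun S => S ∈ DivKF d n μ k₀)).card := by
      intro μ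
      congr 1
      ext S
      simp only [Finset.mem_filter]
      exact ⟨fun h => ⟨DivKF_subset_PartKF h, h⟩, fun h => h.2⟩
    calc ∑ μ ∈ Rk, (DivKF d n μ k₀).card
        = ∑ μ ∈ Rk, ∑ S ∈ PartKF d n k₀, if S ∈ DivKF d n μ k₀ then 1 else 0 := by
          refine Finset.sum_congr rfl fun μ _ => ?_
          rw [h1 μ, Finset.card_filter]
      _ = ∑ S ∈ PartKF d n k₀, ∑ μ ∈ Rk, if S ∈ DivKF d n μ k₀ then 1 else 0 :=
          Finset.sum_comm
      _ = ∑ S ∈ PartKF d n k₀, (Rk.filter (fun μ => S ∈ DivKF d n μ k₀)).card := by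
          refine Finset.sum_congr rfl fun S _ => ?_
          rw [Finset.card_filter]
  have hswapR : ∑ μ ∈ Rk, ((DivKF d n μ k₀).card : ℝ)
      = ∑ S ∈ PartKF d n k₀, ((Rk.filter (fun μ => S ∈ DivKF d n μ k₀)).card : ℝ) := by
    have := congrArg (Nat.cast : ℕ → ℝ) hswap
    push_cast at this
    exact this
  have hex : ∃ S ∈ PartKF d n k₀,
      ρ * (Rk.card : ℝ) ≤ ((Rk.filter (fun μ => S ∈ DivKF d n μ k₀)).card : ℝ) := by
    by_contra hcon
    push_neg at hcon
    rcases Finset.eq_empty_or_nonempty (PartKF d n k₀) with hPe | hPne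
    · rw [hswapR, hPe, Finset.sum_empty] at hlower
      have := mul_pos hRkpos (mul_pos hρ hmult)
      linarith
    · have hP : ((PartKF d n k₀).card : ℝ) ≤ (Nat.multinomial Finset.univ k₀ : ℝ) := by
        exact_mod_cast partKF_card_le k₀
      have hstrict : ∑ S ∈ PartKF d n k₀, ((Rk.filter (fun μ => S ∈ DivKF d n μ k₀)).card : ℝ)
          < ((PartKF d n k₀).card : ℝ) * (ρ * (Rk.card : ℝ)) := by
        calc ∑ S ∈ PartKF d n k₀, ((Rk.filter (fun μ => S ∈ DivKF d n μ k₀)).card : ℝ)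
            < ∑ _S ∈ PartKF d n k₀, ρ * (Rk.card : ℝ) :=
              Finset.sum_lt_sum_of_nonempty hPne (fun S hS => hcon S hS)
          _ = ((PartKF d n k₀).card : ℝ) * (ρ * (Rk.card : ℝ)) := by
              rw [Finset.sum_const, nsmul_eq_mul]
      rw [hswapR] at hlower
      have h1 : ((PartKF d n k₀).card : ℝ) * (ρ * (Rk.card : ℝ))
          ≤ (Nat.multinomial Finset.univ k₀ : ℝ) * (ρ * (Rk.card : ℝ)) :=
        mul_le_mul_of_nonneg_right hP (by positivity)
      have h2 : (Nat.multinomial Finset.univ k₀ : ℝ) * (ρ * (Rk.card : ℝ))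
          = (Rk.card : ℝ) * (ρ * (Nat.multinomial Finset.univ k₀ : ℝ)) := by ring
      linarith
  obtain ⟨S₀, hS₀P, hS₀⟩ := hex
  refine ⟨S₀, (mem_PartKF.mp hS₀P).1, ?_⟩
  have hsub : Rk.filter (fun μ => S₀ ∈ DivKF d n μ k₀) ⊆ R.filter (fun μ => MemDiv d n μ S₀) := by
    intro μ hμ
    rw [Finset.mem_filter] at hμ ⊢
    exact ⟨(Finset.mem_filter.mp hμ.1).1, (mem_DivKF.mp hμ.2).1⟩
  have hcardle : ((Rk.filter (fun μ => S₀ ∈ DivKF d n μ k₀)).card : ℝ)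
      ≤ ((R.filter (fun μ => MemDiv d n μ S₀)).card : ℝ) := by
    exact_mod_cast Finset.card_le_card hsub
  calc ρ / (T : ℝ) * (R.card : ℝ) = ρ * ((R.card : ℝ) / (T : ℝ)) := by ring
    _ ≤ ρ * (Rk.card : ℝ) := mul_le_mul_of_nonneg_left hk₀ hρ.le
    _ ≤ ((Rk.filter (fun μ => S₀ ∈ DivKF d n μ k₀)).card : ℝ) := hS₀
    _ ≤ ((R.filter (fun μ => MemDiv d n μ S₀)).card : ℝ) := hcardle

end QR
namespace QR

open Finset

attribute [local instance] Classical.propDecidable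

variable {d n : ℕ}

lemma greedy_iter (hd2 : 2 ≤ d) (hρ : 0 < rhoMinD d n) (hρ1 : rhoMinD d n ≤ 1) :
    ∀ t : ℕ, ∃ Q : Finset (Fin d → Finset (Fin n)),
      (∀ S ∈ Q, IsOrderedPartition d n S) ∧ Q.card ≤ t ∧
      ((((DF d n).filter (fun μ => IsDadicDist d n μ ∧ ∃ i j, μ i ≠ μ j)).filter
          (fun μ => ¬ ∃ S ∈ Q, MemDiv d n μ S)).card : ℝ)
        ≤ ((n + 1 : ℝ) ^ n) * (1 - rhoMinD d n / ((TypesF d n).card : ℝ)) ^ t := by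
  have hd : 0 < d := by omega
  set ρ := rhoMinD d n with hρdef
  set U₀ := (DF d n).filter (fun μ => IsDadicDist d n μ ∧ ∃ i j, μ i ≠ μ j) with hU₀
  have hTne : (TypesF d n).Nonempty := TypesF_nonempty hd
  set T := (TypesF d n).card with hT
  have hT1 : (1 : ℝ) ≤ (T : ℝ) := by
    exact_mod_cast Finset.card_pos.mpr hTne
  have hT0 : (0 : ℝ) < (T : ℝ) := lt_of_lt_of_le one_pos hT1
  have hfac : 0 ≤ 1 - ρ / (T : ℝ) := by
    have h1 : ρ / (T : ℝ) ≤ 1 / 1 := div_le_div₀ zero_le_one hρ1 one_pos hT1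
    rw [div_one] at h1
    linarith
  intro t
  induction t with
  | zero =>
    refine ⟨∅, by simp, le_refl _, ?_⟩
    rw [pow_zero, mul_one]
    calc ((U₀.filter (fun μ => ¬ ∃ S ∈ (∅ : Finset (Fin d → Finset (Fin n))), MemDiv d n μ S)).card : ℝ)
        ≤ (U₀.card : ℝ) := by exact_mod_cast Finset.card_le_card (Finset.filter_subset _ _)
      _ ≤ ((DF d n).card : ℝ) := by
          exact_mod_cast Finset.card_le_card (Finset.filter_subset _ _)
      _ ≤ ((n + 1 : ℕ) : ℝ) ^ n := by
          rw [← Nat.cast_pow]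
          exact_mod_cast DF_card
      _ = ((n : ℝ) + 1) ^ n := by push_cast; ring
  | succ t IH =>
    obtain ⟨Q, hQparts, hQcard, hQbound⟩ := IH
    set R := U₀.filter (fun μ => ¬ ∃ S ∈ Q, MemDiv d n μ S) with hR
    rcases Finset.eq_empty_or_nonempty R with hRe | hRne
    · refine ⟨Q, hQparts, le_trans hQcard (Nat.le_succ t), ?_⟩
      rw [← hR, hRe]
      simp only [Finset.card_empty, Nat.cast_zero]
      positivity
    · have hRprop : ∀ μ ∈ R, IsDadicDist d n μ ∧ ∃ i j, μ i ≠ μ j := by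
        intro μ hμ
        exact (Finset.mem_filter.mp (Finset.mem_filter.mp hμ).1).2
      obtain ⟨S₀, hS₀part, hS₀cov⟩ := greedy_step hd hρ R hRprop hRne
      refine ⟨insert S₀ Q, ?_, ?_, ?_⟩
      · intro S hS
        rcases Finset.mem_insert.mp hS with rfl | hS'
        · exact hS₀part
        · exact hQparts S hS'
      · exact le_trans (Finset.card_insert_le _ _) (by omega)
      · have hsub : U₀.filter (fun μ => ¬ ∃ S ∈ insert S₀ Q, MemDiv d n μ S)
            ⊆ R.filter (fun μ => ¬ MemDiv d n μ S₀) := by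
          intro μ hμ
          obtain ⟨hμU, hμn⟩ := Finset.mem_filter.mp hμ
          push_neg at hμn
          refine Finset.mem_filter.mpr ⟨Finset.mem_filter.mpr ⟨hμU, ?_⟩, ?_⟩
          · rintro ⟨S, hSQ, hSdiv⟩
            exact hμn S (Finset.mem_insert_of_mem hSQ) hSdiv
          · exact hμn S₀ (Finset.mem_insert_self _ _)
        have hcsplit : (R.filter (fun μ => MemDiv d n μ S₀)).card
            + (R.filter (fun μ => ¬ MemDiv d n μ S₀)).card = R.card :=
          by rw [Finset.card_filter_add_card_filter_not]
        have h1 : ((R.filter (fun μ => ¬ MemDiv d n μ S₀)).card : ℝ)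
            ≤ (1 - ρ / (T : ℝ)) * (R.card : ℝ) := by
          have : ((R.filter (fun μ => ¬ MemDiv d n μ S₀)).card : ℝ)
              = (R.card : ℝ) - ((R.filter (fun μ => MemDiv d n μ S₀)).card : ℝ) := by
            have := congrArg (Nat.cast : ℕ → ℝ) hcsplit
            push_cast at this
            linarith
          rw [this]
          have := hS₀cov
          have hgoal : ρ / (T : ℝ) * (R.card : ℝ) ≤ ((R.filter (fun μ => MemDiv d n μ S₀)).card : ℝ) := this
          ring_nf
          ring_nf at hgoal
          linarith
        calc ((U₀.filter (fun μ => ¬ ∃ S ∈ insert S₀ Q, MemDiv d n μ S)).card : ℝ)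
            ≤ ((R.filter (fun μ => ¬ MemDiv d n μ S₀)).card : ℝ) := by
              exact_mod_cast Finset.card_le_card hsub
          _ ≤ (1 - ρ / (T : ℝ)) * (R.card : ℝ) := h1
          _ ≤ (1 - ρ / (T : ℝ)) * (((n + 1 : ℝ) ^ n) * (1 - ρ / (T : ℝ)) ^ t) :=
              mul_le_mul_of_nonneg_left hQbound hfac
          _ = ((n + 1 : ℝ) ^ n) * (1 - ρ / (T : ℝ)) ^ (t + 1) := by
              rw [pow_succ]; ring

end QR
namespace QR

open Finset

attribute [local instance] Classical.propDecidable

variable {d n : ℕ}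

set_option maxHeartbeats 1000000 in
lemma qd_upper (hd2 : 2 ≤ d) (hn : 3 ≤ n) (hρ : 0 < rhoMinD d n) (hρ1 : rhoMinD d n ≤ 1) :
    (∃ Q : Finset (Fin d → Finset (Fin n)), IsHitter d n Q) ∧
    (qd d n : ℝ) * rhoMinD d n ≤ 2 * (n : ℝ) ^ (2 * d) * Real.log n := by
  have hd : 0 < d := by omega
  set ρ := rhoMinD d n with hρdef
  have hTne : (TypesF d n).Nonempty := TypesF_nonempty hd
  set T := (TypesF d n).card with hT
  have hT1 : (1 : ℝ) ≤ (T : ℝ) := by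
    exact_mod_cast Finset.card_pos.mpr hTne
  have hT0 : (0 : ℝ) < (T : ℝ) := lt_of_lt_of_le one_pos hT1
  have hfac0 : 0 ≤ 1 - ρ / (T : ℝ) := by
    have h1 : ρ / (T : ℝ) ≤ 1 / 1 := div_le_div₀ zero_le_one hρ1 one_pos hT1
    rw [div_one] at h1
    linarith
  set B : ℝ := ((n : ℝ) + 1) ^ n with hB
  have hn1 : (1 : ℝ) ≤ (n : ℝ) + 1 := by
    have : (0 : ℝ) ≤ (n : ℝ) := Nat.cast_nonneg n
    linarith
  have hB1 : (1 : ℝ) ≤ B := one_le_pow₀ hn1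
  have hB0 : (0 : ℝ) < B := lt_of_lt_of_le one_pos hB1
  have hlogB0 : 0 ≤ Real.log B := Real.log_nonneg hB1
  set t₀ := Nat.floor ((T : ℝ) * Real.log B / ρ) + 1 with ht₀def
  have ht₀ : (T : ℝ) * Real.log B / ρ < (t₀ : ℝ) := by
    rw [ht₀def]
    push_cast
    exact Nat.lt_floor_add_one _
  obtain ⟨Q, hQparts, hQcard, hQbound⟩ := greedy_iter hd2 hρ hρ1 t₀
  -- show the remaining mass is < 1
  have hexp : B * (1 - ρ / (T : ℝ)) ^ t₀ < 1 := by
    have he : 1 - ρ / (T : ℝ) ≤ Real.exp (-(ρ / (T : ℝ))) := by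
      have := Real.add_one_le_exp (-(ρ / (T : ℝ)))
      linarith
    have hp : (1 - ρ / (T : ℝ)) ^ t₀ ≤ Real.exp (-(ρ / (T : ℝ))) ^ t₀ :=
      pow_le_pow_left₀ hfac0 he t₀
    have hee : Real.exp (-(ρ / (T : ℝ))) ^ t₀ = Real.exp ((t₀ : ℝ) * (-(ρ / (T : ℝ)))) :=
      (Real.exp_nat_mul _ _).symm
    have hlt : Real.exp ((t₀ : ℝ) * (-(ρ / (T : ℝ)))) < Real.exp (-(Real.log B)) := by
      apply Real.exp_lt_exp.mpr
      have h2 : (T : ℝ) * Real.log B < (t₀ : ℝ) * ρ := by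
        rw [div_lt_iff₀ hρ] at ht₀
        exact ht₀
      have h3 : Real.log B < (t₀ : ℝ) * ρ / (T : ℝ) := by
        rw [lt_div_iff₀ hT0]
        linarith
      have h4 : (t₀ : ℝ) * (-(ρ / (T : ℝ))) = -((t₀ : ℝ) * ρ / (T : ℝ)) := by ring
      rw [h4]
      linarith
    have hexpneg : Real.exp (-(Real.log B)) = 1 / B := by
      rw [Real.exp_neg, Real.exp_log hB0, one_div]
    calc B * (1 - ρ / (T : ℝ)) ^ t₀
        ≤ B * Real.exp ((t₀ : ℝ) * (-(ρ / (T : ℝ)))) := by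
          apply mul_le_mul_of_nonneg_left _ hB0.le
          rw [← hee]
          exact hp
      _ < B * (1 / B) := by
          apply mul_lt_mul_of_pos_left _ hB0
          rw [← hexpneg]
          exact hlt
      _ = 1 := by field_simp
  -- remaining set is empty
  set U₀ := (DF d n).filter (fun μ => IsDadicDist d n μ ∧ ∃ i j, μ i ≠ μ j) with hU₀
  have hempty : U₀.filter (fun μ => ¬ ∃ S ∈ Q, MemDiv d n μ S) = ∅ := by
    rw [← Finset.card_eq_zero]
    have h1 : ((U₀.filter (fun μ => ¬ ∃ S ∈ Q, MemDiv d n μ S)).card : ℝ) < 1 :=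
      lt_of_le_of_lt hQbound hexp
    exact_mod_cast Nat.cast_lt_one.mp h1
  have hhit : IsHitter d n Q := by
    refine ⟨hQparts, ?_⟩
    intro μ h1 h2
    by_contra hno
    have hμU : μ ∈ U₀ := Finset.mem_filter.mpr ⟨dadic_mem_DF hd2 h1, h1, h2⟩
    have : μ ∈ U₀.filter (fun μ => ¬ ∃ S ∈ Q, MemDiv d n μ S) :=
      Finset.mem_filter.mpr ⟨hμU, hno⟩
    rw [hempty] at this
    exact absurd this (Finset.notMem_empty μ)
  refine ⟨⟨Q, hhit⟩, ?_⟩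
  -- qd ≤ t₀
  have hqd : qd d n ≤ t₀ := le_trans (Nat.sInf_le ⟨Q, hhit, rfl⟩) hQcard
  have hqdR : (qd d n : ℝ) ≤ (t₀ : ℝ) := by exact_mod_cast hqd
  have ht₀le : (t₀ : ℝ) ≤ (T : ℝ) * Real.log B / ρ + 1 := by
    rw [ht₀def]
    push_cast
    have := Nat.floor_le (a := (T : ℝ) * Real.log B / ρ) (by positivity)
    linarith
  have hstep : (qd d n : ℝ) * ρ ≤ (T : ℝ) * Real.log B + ρ := by
    have h5 : (t₀ : ℝ) * ρ ≤ ((T : ℝ) * Real.log B / ρ + 1) * ρ :=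
      mul_le_mul_of_nonneg_right ht₀le hρ.le
    have h6 : ((T : ℝ) * Real.log B / ρ + 1) * ρ = (T : ℝ) * Real.log B + ρ := by
      field_simp
    have h7 : (qd d n : ℝ) * ρ ≤ (t₀ : ℝ) * ρ := mul_le_mul_of_nonneg_right hqdR hρ.le
    linarith
  -- the numeric bound
  refine le_trans hstep ?_
  obtain ⟨a, rfl⟩ : ∃ a, d = a + 1 := ⟨d - 1, by omega⟩
  have hN3 : (3 : ℝ) ≤ (n : ℝ) := by exact_mod_cast hn
  have hN0 : (0 : ℝ) < (n : ℝ) := by linarith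
  have hlog1 : (1 : ℝ) ≤ Real.log n := by
    rw [Real.le_log_iff_exp_le hN0]
    have := Real.exp_one_lt_d9
    linarith
  have hlogn1 : Real.log ((n : ℝ) + 1) ≤ 2 * Real.log n := by
    have h1 : (n : ℝ) + 1 ≤ (n : ℝ) ^ 2 := by nlinarith
    have h2 : Real.log ((n : ℝ) + 1) ≤ Real.log ((n : ℝ) ^ 2) :=
      Real.log_le_log (by positivity) h1
    rw [Real.log_pow] at h2
    push_cast at h2
    linarith
  have hlogn0 : 0 ≤ Real.log ((n : ℝ) + 1) := Real.log_nonneg (by linarith)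
  have hTle : (T : ℝ) ≤ ((n : ℝ) + 1) ^ a := by
    have := typesF_card_le (d := a + 1) (n := n) (by omega)
    simp only [Nat.add_sub_cancel] at this
    calc (T : ℝ) ≤ (((n + 1 : ℕ) ^ a : ℕ) : ℝ) := by exact_mod_cast this
      _ = ((n : ℝ) + 1) ^ a := by push_cast; ring
  have hpow : ((n : ℝ) + 1) ^ a ≤ (n : ℝ) ^ (2 * a) := by
    have h1 : (n : ℝ) + 1 ≤ (n : ℝ) ^ 2 := by nlinarith
    calc ((n : ℝ) + 1) ^ a ≤ ((n : ℝ) ^ 2) ^ a := pow_le_pow_left₀ (by positivity) h1 a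
      _ = (n : ℝ) ^ (2 * a) := by rw [← pow_mul]
  set P : ℝ := (n : ℝ) ^ (2 * a) with hP
  have hP1 : (1 : ℝ) ≤ P := one_le_pow₀ (by linarith)
  have hlogBval : Real.log B = (n : ℝ) * Real.log ((n : ℝ) + 1) := by
    rw [hB, Real.log_pow]
  have hTB : (T : ℝ) * Real.log B ≤ P * ((n : ℝ) * (2 * Real.log n)) := by
    rw [hlogBval]
    apply mul_le_mul (le_trans hTle hpow)
    · apply mul_le_mul_of_nonneg_left hlogn1 hN0.le
    · positivity
    · positivity
  have hrw : (n : ℝ) ^ (2 * (a + 1)) = P * ((n : ℝ) * (n : ℝ)) := by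
    have h1 : 2 * (a + 1) = 2 * a + 2 := by ring
    rw [h1, pow_add, hP]
    ring
  rw [hrw]
  have h6 : (1 : ℝ) ≤ P * Real.log n := one_le_mul_of_one_le_of_one_le hP1 hlog1
  have h8 : (6 : ℝ) ≤ (n : ℝ) * ((n : ℝ) - 1) := by nlinarith
  have h9 : (1 : ℝ) * 6 ≤ (P * Real.log n) * ((n : ℝ) * ((n : ℝ) - 1)) :=
    mul_le_mul h6 h8 (by norm_num) (by positivity)
  nlinarith [h9, hρ1, hTB]

end QR
/-- `1/ρ^{(d)}_min(n) ≤ q^{(d)}(n) ≤ 2 n^{2d} ln n / ρ^{(d)}_min(n)`. -/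
theorem qd_rho_reduction (d n : ℕ) (hd : 2 ≤ d) (hn : 3 ≤ n)
    (hex : ∃ μ : Fin n → ℝ, IsDadicDist d n μ ∧ ∃ i j, μ i ≠ μ j) :
    1 / rhoMinD d n ≤ (qd d n : ℝ) ∧
    (qd d n : ℝ) ≤ 2 * (n : ℝ) ^ (2 * d) * Real.log n / rhoMinD d n := by
  have hd0 : 0 < d := by omega
  obtain ⟨μ₀, hμ₀1, hμ₀2, hμ₀eq⟩ := QR.rhoMin_mem hd0 hex
  have hρ0 : 0 ≤ rhoMinD d n := by
    rw [hμ₀eq]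
    exact QR.rhoDiv_nonneg hd0 μ₀
  rcases eq_or_lt_of_le hρ0 with hz | hpos
  · -- degenerate case: `ρ_min = 0`, so no hitter exists and `qd = 0`
    have hdiv0 : rhoDiv d n μ₀ = 0 := by rw [← hμ₀eq, ← hz]
    have hnohit : ∀ Q : Finset (Fin d → Finset (Fin n)), ¬ IsHitter d n Q := by
      intro Q hQ
      obtain ⟨S, _, hS⟩ := hQ.2 μ₀ hμ₀1 hμ₀2
      exact QR.no_div_of_rhoDiv_zero hd0 hdiv0 S hS
    have hqd : qd d n = 0 := by
      have hset : {m | ∃ Q : Finset (Fin d → Finset (Fin n)), IsHitter d n Q ∧ Q.card = m}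
          = ∅ := by
        ext m
        simp only [Set.mem_setOf_eq, Set.mem_empty_iff_false, iff_false, not_exists]
        rintro Q ⟨hQ, -⟩
        exact hnohit Q hQ
      rw [qd, hset, Nat.sInf_empty]
    rw [hqd, ← hz]
    norm_num
  · have hρ1 : rhoMinD d n ≤ 1 := by
      rw [hμ₀eq]
      exact QR.rhoDiv_le_one hd0 μ₀
    obtain ⟨⟨Q, hQ⟩, hupper⟩ := QR.qd_upper hd hn hpos hρ1
    constructor
    · have hne : {m | ∃ Q : Finset (Fin d → Finset (Fin n)), IsHitter d n Q ∧ Q.card = m}.Nonempty :=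
        ⟨Q.card, Q, hQ, rfl⟩
      obtain ⟨Qm, hQm, hQmcard⟩ := Nat.sInf_mem hne
      have hlb := QR.hitter_lower_bound hd0 hμ₀1 hμ₀2 hQm
      rw [← hμ₀eq] at hlb
      have hqdeq : qd d n = Qm.card := by rw [qd]; exact hQmcard.symm
      rw [div_le_iff₀ hpos, hqdeq]
      exact hlb
    · rw [div_eq_mul_inv, ← mul_comm (rhoMinD d n)⁻¹ _, ← div_eq_inv_mul]
      rw [le_div_iff₀ hpos]
      exact hupper
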